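/- Let (Θ, Ω, f : Θ → Z) be a cardinal implementation problem such that f is surjective and Θ^una ∩ Θ^strict ⊆ Θ ⊆ Θ^strict. If f is UD^∞-implemented by a stochastic finite-action mechanism M = ⟨S, g⟩, then for every z ∈ Z the product set ×_{i∈I} S_i^z is nonempty and g[×_{i∈I} S_i^z] = {z}, i.e., g(s) is the degenerate lottery on z for every s ∈ ×_{i∈I} S_i^z. -/

import Mathlib

open Function

noncomputable section

/-- A lottery (probability distribution) on the finite outcome set `Z`. -/
def Lottery (Z : Type) [Fintype Z] : Type :=
  {y : Z → ℝ // (∀ z, 0 ≤ y z) ∧ ∑ z, y z = 1}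

variable {Z : Type} [Fintype Z]

/-- The degenerate lottery on the outcome `z`. -/
def Lottery.delta [DecidableEq Z] (z : Z) : Lottery Z :=
  ⟨fun z' => if z' = z then 1 else 0, fun z' => by positivity, by simp⟩

/-- Expected utility of the lottery `y` under the vN-M utility function `u`. -/
def expUtil (u : Z → ℝ) (y : Lottery Z) : ℝ := ∑ z, y.1 z * u z

variable {I : Type} [DecidableEq I] {S : I → Type}

/-- `s_i` is strictly dominated (for agent `i`, at cardinal state `u`, in the mechanism
with outcome function `g`) on the product set `×_j T j`. -/
def Dominated (u : I → Z → ℝ) (g : (∀ i, S i) → Lottery Z)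
    (T : ∀ j, Set (S j)) (i : I) (si : S i) : Prop :=
  ∃ si' : S i, ∀ s : ∀ j, S j, (∀ j, j ≠ i → s j ∈ T j) →
    expUtil (u i) (g (update s i si)) < expUtil (u i) (g (update s i si'))

/-- `UDk u g k i` is the set of strategies of agent `i` surviving `k` rounds of iterative
deletion of strictly dominated strategies at the cardinal state `u` (`UDk u g 0 i = S i`). -/
def UDk (u : I → Z → ℝ) (g : (∀ i, S i) → Lottery Z) : ℕ → ∀ i, Set (S i)
  | 0 => fun _ => Set.univ
  | (k + 1) => fun i => {si ∈ UDk u g k i | ¬ Dominated u g (UDk u g k) i si}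

/-- `UD(M,u)`: profiles surviving one round of deletion. -/
def UDoneSet (u : I → Z → ℝ) (g : (∀ i, S i) → Lottery Z) : Set (∀ i, S i) :=
  {s | ∀ i, s i ∈ UDk u g 1 i}

/-- `UD^∞(M,u)`: profiles surviving iterative deletion (all rounds `k ≥ 1`). -/
def UDinfSet (u : I → Z → ℝ) (g : (∀ i, S i) → Lottery Z) : Set (∀ i, S i) :=
  {s | ∀ i, ∀ k : ℕ, s i ∈ UDk u g (k + 1) i}

/-- `S_i^z`: strategies of agent `i` from which the degenerate outcome `z` is reachable. -/
def Sz [DecidableEq Z] (g : (∀ i, S i) → Lottery Z) (i : I) (z : Z) : Set (S i) :=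
  {si | ∃ s : ∀ j, S j, s i = si ∧ g s = Lottery.delta z}

/-- `×_j T j` satisfies the non-domination property at `u`. -/
def NonDomProp (u : I → Z → ℝ) (g : (∀ i, S i) → Lottery Z) (T : ∀ j, Set (S j)) : Prop :=
  ∀ i, ∀ si ∈ T i, ∀ si' : S i, ∃ s : ∀ j, S j, (∀ j, j ≠ i → s j ∈ T j) ∧
    expUtil (u i) (g (update s i si')) ≤ expUtil (u i) (g (update s i si))

/-- `u` is a cardinal representation of the ordinal state `θ`. -/
def Represents (u : I → Z → ℝ) (θ : I → Z → Z → Prop) : Prop :=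
  ∀ i z z', θ i z z' ↔ u i z' ≤ u i z

/-- `Θ*`: all ordinal states (complete and transitive preference profiles). -/
def ThetaStar (I Z : Type) : Set (I → Z → Z → Prop) :=
  {θ | ∀ i, (∀ z z', θ i z z' ∨ θ i z' z) ∧ Transitive (θ i)}

/-- `Θ^una`: ordinal states where all agents have identical preferences. -/
def ThetaUna (I Z : Type) : Set (I → Z → Z → Prop) :=
  {θ ∈ ThetaStar I Z | ∀ i j z z', θ i z z' ↔ θ j z z'}

/-- `Θ^strict`: ordinal states where no agent has non-trivial indifference. -/
def ThetaStrict (I Z : Type) : Set (I → Z → Z → Prop) :=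
  {θ ∈ ThetaStar I Z | ∀ i z z', θ i z z' → θ i z' z → z = z'}

/-- The strict part `≻_i^θ`. -/
def StrictPref (θ : I → Z → Z → Prop) (i : I) (z z' : Z) : Prop := θ i z z' ∧ ¬ θ i z' z

/-- Agent `i` is a dictator for `f` on `Θ`. -/
def Dictator (Θ : Set (I → Z → Z → Prop)) (f : (I → Z → Z → Prop) → Z) (i : I) : Prop :=
  ∀ θ ∈ Θ, ∀ z, z ≠ f θ → StrictPref θ i (f θ) z

/-- `(Θ, Ω)` form a cardinal implementation problem: `Θ` is a set of ordinal states, every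
member of `Ω` is a cardinal representation of some `θ ∈ Θ`, and `Ω_θ ≠ ∅` for all `θ ∈ Θ`. -/
def CIProblem (Θ : Set (I → Z → Z → Prop)) (Ω : Set (I → Z → ℝ)) : Prop :=
  Θ ⊆ ThetaStar I Z ∧ (∀ u ∈ Ω, ∃ θ ∈ Θ, Represents u θ) ∧
    ∀ θ ∈ Θ, ∃ u ∈ Ω, Represents u θ

/-- `f` is UD-implemented by the mechanism with outcome function `g`. -/
def UDImplements [DecidableEq Z] (Θ : Set (I → Z → Z → Prop)) (Ω : Set (I → Z → ℝ))
    (f : (I → Z → Z → Prop) → Z) (g : (∀ i, S i) → Lottery Z) : Prop :=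
  ∀ θ ∈ Θ, ∀ u ∈ Ω, Represents u θ → g '' UDoneSet u g = {Lottery.delta (f θ)}

/-- `f` is UD^∞-implemented by the mechanism with outcome function `g`. -/
def UDinfImplements [DecidableEq Z] (Θ : Set (I → Z → Z → Prop)) (Ω : Set (I → Z → ℝ))
    (f : (I → Z → Z → Prop) → Z) (g : (∀ i, S i) → Lottery Z) : Prop :=
  ∀ θ ∈ Θ, ∀ u ∈ Ω, Represents u θ → g '' UDinfSet u g = {Lottery.delta (f θ)}

/-- `Θ^{(i1,i2)-z}`: strict states where `z` is second-best for both `i1` and `i2`,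
whose top-ranked outcomes differ. -/
def ThetaSecond [Fintype Z] (i1 i2 : I) (z : Z) : Set (I → Z → Z → Prop) :=
  {θ ∈ ThetaStrict I Z |
    Set.ncard {z' | θ i1 z z'} = Fintype.card Z - 1 ∧
    Set.ncard {z' | θ i2 z z'} = Fintype.card Z - 1 ∧
    {z' | θ i1 z z'} ≠ {z' | θ i2 z z'}}

end

section AuxLemmas

variable {Z : Type} [Fintype Z] {I : Type} [DecidableEq I] {S : I → Type}

lemma expUtil_le_of_top (u : Z → ℝ) (z : Z) (h : ∀ z', u z' ≤ u z) (y : Lottery Z) :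
    expUtil u y ≤ u z := by
  calc expUtil u y = ∑ w, y.1 w * u w := rfl
    _ ≤ ∑ w, y.1 w * u z :=
        Finset.sum_le_sum (fun w _ => mul_le_mul_of_nonneg_left (h w) (y.2.1 w))
    _ = (∑ w, y.1 w) * u z := by rw [Finset.sum_mul]
    _ = u z := by rw [y.2.2, one_mul]

lemma expUtil_delta [DecidableEq Z] (u : Z → ℝ) (z : Z) :
    expUtil u (Lottery.delta z) = u z := by
  simp [expUtil, Lottery.delta, ite_mul]

lemma UDk_antitone (u : I → Z → ℝ) (g : (∀ i, S i) → Lottery Z) {k m : ℕ} (h : k ≤ m)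
    (i : I) : UDk u g m i ⊆ UDk u g k i := by
  induction m with
  | zero => simpa [Nat.le_zero.mp h] using subset_rfl
  | succ m ih =>
    rcases Nat.lt_or_ge k (m + 1) with h' | h'
    · exact fun si hsi => ih (Nat.lt_succ_iff.mp h') hsi.1
    · have : k = m + 1 := le_antisymm h h'
      subst this; exact subset_rfl

lemma max_mem_UDk (u : I → Z → ℝ) (g : (∀ i, S i) → Lottery Z) {k : ℕ}
    (t : ∀ i, S i) (hs : ∀ j, t j ∈ UDk u g k j) (i : I) (si : S i)
    (hmax : ∀ si', expUtil (u i) (g (update t i si')) ≤ expUtil (u i) (g (update t i si))) :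
    ∀ m, m ≤ k + 1 → si ∈ UDk u g m i := by
  intro m hm
  induction m with
  | zero => trivial
  | succ m ihm =>
    refine ⟨ihm (le_trans (Nat.le_succ m) hm), ?_⟩
    rintro ⟨si', hdom⟩
    have hm' : m ≤ k := Nat.succ_le_succ_iff.mp hm
    have hlt := hdom t (fun j _ => UDk_antitone u g hm' j (hs j))
    exact (hmax si').not_gt hlt

lemma exists_profile_UDk [Fintype I] (hfin : ∀ i, Finite (S i)) (hne : ∀ i, Nonempty (S i))
    (u : I → Z → ℝ) (g : (∀ i, S i) → Lottery Z) (k : ℕ) :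
    ∃ s : ∀ i, S i, ∀ i, s i ∈ UDk u g k i := by
  induction k with
  | zero => exact ⟨fun i => (hne i).some, fun i => trivial⟩
  | succ k ih =>
    obtain ⟨t, ht⟩ := ih
    have hmax : ∀ i : I, ∃ si : S i,
        ∀ si', expUtil (u i) (g (update t i si')) ≤ expUtil (u i) (g (update t i si)) := by
      intro i
      have := hfin i; have := hne i
      exact Finite.exists_max (fun si => expUtil (u i) (g (update t i si)))
    choose s hs using hmax
    exact ⟨s, fun i => max_mem_UDk u g t ht i (s i) (hs i) (k + 1) le_rfl⟩

lemma antitone_stabilizes {α : Type} [Finite α] (A : ℕ → Set α)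
    (hA : ∀ k m : ℕ, k ≤ m → A m ⊆ A k) : ∃ K, ∀ k, K ≤ k → A k = A K := by
  have hran : (Set.range fun k => (A k).ncard).Nonempty := ⟨_, ⟨0, rfl⟩⟩
  obtain ⟨K, hK⟩ := Nat.sInf_mem hran
  refine ⟨K, fun k hk => ?_⟩
  have h1 : A k ⊆ A K := hA K k hk
  have h2 : (A K).ncard ≤ (A k).ncard := by
    exact le_trans (le_of_eq hK) (Nat.sInf_le ⟨k, rfl⟩)
  exact Set.eq_of_subset_of_ncard_le h1 h2 (Set.toFinite _)

lemma UDinf_nonempty [Fintype I] (hfin : ∀ i, Finite (S i)) (hne : ∀ i, Nonempty (S i))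
    (u : I → Z → ℝ) (g : (∀ i, S i) → Lottery Z) : (UDinfSet u g).Nonempty := by
  have hstab : ∀ i : I, ∃ K, ∀ k, K ≤ k → UDk u g k i = UDk u g K i := by
    intro i
    have := hfin i
    exact antitone_stabilizes (fun k => UDk u g k i) (fun k m h => UDk_antitone u g h i)
  choose K hK using hstab
  set KK := Finset.univ.sup K with hKK
  obtain ⟨s, hs⟩ := exists_profile_UDk hfin hne u g KK
  refine ⟨s, fun i k => ?_⟩
  have hKi : K i ≤ KK := Finset.le_sup (Finset.mem_univ i)
  rcases le_total (k + 1) KK with h | h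
  · exact UDk_antitone u g h i (hs i)
  · rw [hK i (k + 1) (le_trans hKi h), ← hK i KK hKi]
    exact hs i

lemma Sz_subset_UDk [DecidableEq Z] (u : I → Z → ℝ) (g : (∀ i, S i) → Lottery Z) (z : Z)
    (htop : ∀ i z', z' ≠ z → u i z' < u i z) :
    ∀ k i, Sz g i z ⊆ UDk u g k i := by
  intro k
  induction k with
  | zero => intro i si _; trivial
  | succ k ih =>
    intro i si hsi
    refine ⟨ih i hsi, ?_⟩
    rintro ⟨si', hdom⟩
    obtain ⟨s, hsi_eq, hgs⟩ := hsi
    subst hsi_eq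
    have hmem : ∀ j, j ≠ i → s j ∈ UDk u g k j := fun j _ => ih j ⟨s, rfl, hgs⟩
    have hlt := hdom s hmem
    rw [Function.update_eq_self, hgs, expUtil_delta] at hlt
    have hub : ∀ z', u i z' ≤ u i z := by
      intro z'
      by_cases hz : z' = z
      · subst hz; exact le_rfl
      · exact (htop i z' hz).le
    exact absurd hlt (not_lt.mpr (expUtil_le_of_top (u i) z hub _))

end AuxLemmas

/-- **Lemma 3 (Xiong).** If `f` is UD^∞-implemented by a stochastic finite-action mechanism
`⟨S, g⟩`, then for every outcome `z`, the product set `×_i S_i^z` is nonempty and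
`g[×_i S_i^z] = {z}`. -/
theorem image_of_Sz_product_UDinf
    {I Z : Type} [Fintype I] [Fintype Z] [DecidableEq I] [DecidableEq Z]
    (hI : 2 ≤ Fintype.card I) (hZ : 2 ≤ Fintype.card Z)
    (Θ : Set (I → Z → Z → Prop)) (Ω : Set (I → Z → ℝ)) (f : (I → Z → Z → Prop) → Z)
    (hCIP : CIProblem Θ Ω)
    (hsurj : ∀ z : Z, ∃ θ ∈ Θ, f θ = z)
    (hsub1 : ThetaUna I Z ∩ ThetaStrict I Z ⊆ Θ) (hsub2 : Θ ⊆ ThetaStrict I Z)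
    (S : I → Type) (hfin : ∀ i, Finite (S i)) (hne : ∀ i, Nonempty (S i))
    (g : (∀ i, S i) → Lottery Z) (himp : UDinfImplements Θ Ω f g) :
    ∀ z : Z, {s : ∀ i, S i | ∀ i, s i ∈ Sz g i z}.Nonempty ∧
      ∀ s ∈ {s : ∀ i, S i | ∀ i, s i ∈ Sz g i z}, g s = Lottery.delta z := by
  intro z
  -- Part A: nonemptiness, via surjectivity of f
  obtain ⟨θ', hθ', hfθ'⟩ := hsurj z
  obtain ⟨u', hu'Ω, hrep'⟩ := hCIP.2.2 θ' hθ'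
  obtain ⟨s0, hs0⟩ := UDinf_nonempty hfin hne u' g
  have hgs0 : g s0 = Lottery.delta z := by
    have hmem : g s0 ∈ g '' UDinfSet u' g := ⟨s0, hs0, rfl⟩
    rw [himp θ' hθ' u' hu'Ω hrep'] at hmem
    rw [hmem, hfθ']
  have hs0Sz : ∀ i, s0 i ∈ Sz g i z := fun i => ⟨s0, rfl, hgs0⟩
  -- Part B: construct a unanimous strict state with z on top
  set e := Fintype.equivFin Z with he
  set v : Z → ℝ := fun z' => if z' = z then (Fintype.card Z : ℝ) else ((e z' : ℕ) : ℝ) with hv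
  have hvlt : ∀ z', z' ≠ z → v z' < v z := by
    intro z' h
    simp only [hv, if_neg h, if_pos rfl]
    exact_mod_cast (e z').2
  have hvinj : Function.Injective v := by
    intro a b hab
    by_cases ha : a = z <;> by_cases hb : b = z
    · rw [ha, hb]
    · subst ha; exact absurd hab.symm (ne_of_lt (hvlt b hb))
    · subst hb; exact absurd hab (ne_of_lt (hvlt a ha))
    · simp only [hv, if_neg ha, if_neg hb] at hab
      exact e.injective (Fin.val_injective (Nat.cast_injective hab))
  set θz : I → Z → Z → Prop := fun _ z1 z2 => v z2 ≤ v z1 with hθz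
  have hstar : θz ∈ ThetaStar I Z := by
    intro i
    refine ⟨fun z1 z2 => le_total (v z2) (v z1), ?_⟩
    intro a b c hab hbc
    exact le_trans hbc hab
  have hθzΘ : θz ∈ Θ := by
    apply hsub1
    constructor
    · exact ⟨hstar, fun i j z1 z2 => Iff.rfl⟩
    · exact ⟨hstar, fun i z1 z2 h1 h2 => hvinj (le_antisymm h2 h1)⟩
  obtain ⟨u, huΩ, hrepu⟩ := hCIP.2.2 θz hθzΘ
  have htop : ∀ i z', z' ≠ z → u i z' < u i z := by
    intro i z' h
    have h1 : u i z' ≤ u i z := (hrepu i z z').mp ((hvlt z' h).le)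
    have h2 : ¬ u i z ≤ u i z' := by
      intro hh
      exact absurd ((hrepu i z' z).mpr hh) (not_le_of_gt (hvlt z' h))
    exact lt_of_le_not_ge h1 h2
  have hSzUD := Sz_subset_UDk u g z htop
  have hUDmem : ∀ s : ∀ i, S i, (∀ i, s i ∈ Sz g i z) → s ∈ UDinfSet u g :=
    fun s hs i k => hSzUD (k + 1) i (hs i)
  have himg := himp θz hθzΘ u huΩ hrepu
  have hfz : Lottery.delta (f θz) = Lottery.delta z := by
    have : g s0 ∈ g '' UDinfSet u g := ⟨s0, hUDmem s0 hs0Sz, rfl⟩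
    rw [himg] at this
    rw [← this, hgs0]
  refine ⟨⟨s0, hs0Sz⟩, ?_⟩
  intro s hs
  have : g s ∈ g '' UDinfSet u g := ⟨s, hUDmem s hs, rfl⟩
  rw [himg] at this
  rw [this, hfz]
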